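/- Assume ℙ(Y=1,S=s) > 0 and set b_s := ℙ(S=s) and m_s := E_{X|S=s}[η(X,s)] for s ∈ {0,1}. For every λ ∈ ℝ, the classifier g*_λ defined by g*_λ(x,1) := 1{1 ≤ η(x,1)·(2 − λ/ℙ(Y=1,S=1))} and g*_λ(x,0) := 1{1 ≤ η(x,0)·(2 + λ/ℙ(Y=1,S=0))} minimizes the Lagrangian g ↦ R(g) + λ·(ℙ(g(X,S)=1 | Y=1,S=1) − ℙ(g(X,S)=1 | Y=1,S=0)) over all classifiers g, and the minimum value equals ℙ(Y=1) − E_{X|S=1}[(b_1(2η(X,1)−1) − λ·η(X,1)/m_1)₊] − E_{X|S=0}[(b_0(2η(X,0)−1) + λ·η(X,0)/m_0)₊]. -/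

import Mathlib

open MeasureTheory ProbabilityTheory Set

private lemma intbl {Ω : Type*} [MeasurableSpace Ω] (μ : Measure Ω) [IsFiniteMeasure μ]
    {f : Ω → ℝ} (hf : Measurable f) {C : ℝ} (h : ∀ ω, |f ω| ≤ C) : Integrable f μ := by
  refine (integrable_const C).mono' hf.aestronglyMeasurable ?_
  filter_upwards with ω
  simpa [Real.norm_eq_abs] using h ω

private lemma meas_toReal {Ω : Type*} [MeasurableSpace Ω] (μ : Measure Ω) [IsProbabilityMeasure μ]
    {A : Set Ω} (hA : MeasurableSet A) :
    (μ A).toReal = ∫ ω, A.indicator (fun _ => (1:ℝ)) ω ∂μ := by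
  rw [integral_indicator_const (1:ℝ) hA, smul_eq_mul, mul_one]; rfl

private lemma cond_integral {Ω : Type*} [MeasurableSpace Ω] (μ : Measure Ω)
    [IsProbabilityMeasure μ] {A : Set Ω} (hA0 : μ A ≠ 0) (f : Ω → ℝ) :
    (μ A).toReal * ∫ ω, f ω ∂(μ[|A]) = ∫ ω in A, f ω ∂μ := by
  rw [ProbabilityTheory.cond, integral_smul_measure, ENNReal.toReal_inv, smul_eq_mul,
    ← mul_assoc, mul_inv_cancel₀, one_mul]
  exact ENNReal.toReal_ne_zero.2 ⟨hA0, measure_ne_top μ A⟩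

private lemma split_S {Ω : Type*} [MeasurableSpace Ω] (P : Measure Ω) [IsProbabilityMeasure P]
    (S : Ω → Bool) (hS : Measurable S)
    (hS1 : P {ω | S ω = true} ≠ 0) (hS0 : P {ω | S ω = false} ≠ 0)
    (f f1 f0 : Ω → ℝ) (hf : Integrable f P)
    (h1 : ∀ ω, S ω = true → f ω = f1 ω) (h0 : ∀ ω, S ω = false → f ω = f0 ω) :
    ∫ ω, f ω ∂P = (P {ω | S ω = true}).toReal * ∫ ω, f1 ω ∂(P[|{ω | S ω = true}])
      + (P {ω | S ω = false}).toReal * ∫ ω, f0 ω ∂(P[|{ω | S ω = false}]) := by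
  have hA : MeasurableSet {ω | S ω = true} := hS (measurableSet_singleton true)
  have hcompl : {ω | S ω = false} = {ω | S ω = true}ᶜ := by
    ext ω; simp
  rw [cond_integral P hS1, cond_integral P hS0, hcompl,
    setIntegral_congr_fun hA (fun ω hω => (h1 ω hω).symm),
    setIntegral_congr_fun hA.compl (fun ω hω => (h0 ω (by simpa using hω)).symm),
    integral_add_compl hA hf]

private lemma bnd_aux {e c b : ℝ} (he0 : 0 ≤ e) (he1 : e ≤ 1) :
    |b * (e * c - 1)| ≤ |b| * (|c| + 1) := by
  rw [abs_mul]
  have h : |e * c - 1| ≤ |c| + 1 := by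
    rw [abs_le]
    constructor <;> nlinarith [le_abs_self c, neg_abs_le c, abs_nonneg c]
  exact mul_le_mul_of_nonneg_left h (abs_nonneg b)

set_option maxHeartbeats 2000000 in
theorem stmt_16 {d : ℕ} {Ω : Type*} [MeasurableSpace Ω]
    (P : Measure Ω) [IsProbabilityMeasure P]
    (X : Ω → (Fin d → ℝ)) (S Y : Ω → Bool)
    (hX : Measurable X) (hS : Measurable S) (hY : Measurable Y)
    (hSnd : 0 < P {ω | S ω = true} ∧ P {ω | S ω = true} < 1)
    (hYnd : 0 < P {ω | Y ω = true} ∧ P {ω | Y ω = true} < 1)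
    (hYS : ∀ s : Bool, 0 < P {ω | Y ω = true ∧ S ω = s})
    (η : (Fin d → ℝ) → Bool → ℝ)
    (hηm : Measurable (fun p : (Fin d → ℝ) × Bool => η p.1 p.2))
    (hη01 : ∀ x s, η x s ∈ Icc (0:ℝ) 1)
    (hreg : ∀ φ : (Fin d → ℝ) × Bool → ℝ, Measurable φ → (∃ C, ∀ z, |φ z| ≤ C) →
      ∫ ω, (if Y ω then (1:ℝ) else 0) * φ (X ω, S ω) ∂P
        = ∫ ω, η (X ω) (S ω) * φ (X ω, S ω) ∂P)
    (b1 b0 m1 m0 : ℝ)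
    (hb1 : b1 = (P {ω | S ω = true}).toReal)
    (hb0 : b0 = (P {ω | S ω = false}).toReal)
    (hm1 : m1 = ∫ ω, η (X ω) true ∂(ProbabilityTheory.cond P {ω | S ω = true}))
    (hm0 : m0 = ∫ ω, η (X ω) false ∂(ProbabilityTheory.cond P {ω | S ω = false}))
    -- the Lagrangian
    (lam : ℝ)
    (L : ((Fin d → ℝ) → Bool → Bool) → ℝ)
    (hL : ∀ g, L g = (P {ω | g (X ω) (S ω) ≠ Y ω}).toReal
      + lam * ((ProbabilityTheory.cond P {ω | Y ω = true ∧ S ω = true}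
            {ω | g (X ω) (S ω) = true}).toReal
        - (ProbabilityTheory.cond P {ω | Y ω = true ∧ S ω = false}
            {ω | g (X ω) (S ω) = true}).toReal))
    -- the thresholded classifier g*_λ
    (glam : (Fin d → ℝ) → Bool → Bool)
    (hglam1 : ∀ x, glam x true = true
      ↔ 1 ≤ η x true * (2 - lam / (P {ω | Y ω = true ∧ S ω = true}).toReal))
    (hglam0 : ∀ x, glam x false = true
      ↔ 1 ≤ η x false * (2 + lam / (P {ω | Y ω = true ∧ S ω = false}).toReal)) :
    (∀ g : (Fin d → ℝ) → Bool → Bool,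
        Measurable (fun p : (Fin d → ℝ) × Bool => g p.1 p.2) → L glam ≤ L g)
    ∧ L glam = (P {ω | Y ω = true}).toReal
        - (∫ ω, max (b1 * (2 * η (X ω) true - 1) - lam * η (X ω) true / m1) 0
            ∂(ProbabilityTheory.cond P {ω | S ω = true}))
        - (∫ ω, max (b0 * (2 * η (X ω) false - 1) + lam * η (X ω) false / m0) 0
            ∂(ProbabilityTheory.cond P {ω | S ω = false})) := by
  classical
  -- notation
  set p1 : ℝ := (P {ω | Y ω = true ∧ S ω = true}).toReal with hp1def
  set p0 : ℝ := (P {ω | Y ω = true ∧ S ω = false}).toReal with hp0def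
  set c1 : ℝ := 2 - lam / p1 with hc1def
  set c0 : ℝ := 2 + lam / p0 with hc0def
  set H1 : (Fin d → ℝ) → ℝ := fun x => b1 * (η x true * c1 - 1) with hH1def
  set H0 : (Fin d → ℝ) → ℝ := fun x => b0 * (η x false * c0 - 1) with hH0def
  -- basic measurability
  have hA1 : MeasurableSet {ω | S ω = true} := hS (measurableSet_singleton true)
  have hA0 : MeasurableSet {ω | S ω = false} := hS (measurableSet_singleton false)
  have hXS : Measurable (fun ω => (X ω, S ω)) := hX.prodMk hS
  have hηXS : Measurable (fun ω => η (X ω) (S ω)) := hηm.comp hXS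
  have hη1X : Measurable (fun ω => η (X ω) true) :=
    hηm.comp (hX.prodMk measurable_const)
  have hη0X : Measurable (fun ω => η (X ω) false) :=
    hηm.comp (hX.prodMk measurable_const)
  have hB1 : MeasurableSet {ω | Y ω = true ∧ S ω = true} :=
    (hY (measurableSet_singleton true)).inter hA1
  have hB0 : MeasurableSet {ω | Y ω = true ∧ S ω = false} :=
    (hY (measurableSet_singleton true)).inter hA0
  -- positivity
  have hS1ne : P {ω | S ω = true} ≠ 0 := hSnd.1.ne'
  have hS0ne : P {ω | S ω = false} ≠ 0 := by
    have hc : {ω | S ω = false} = {ω | S ω = true}ᶜ := by ext ω; simp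
    rw [hc, prob_compl_eq_one_sub hA1]
    simp only [ne_eq, tsub_eq_zero_iff_le, not_le]
    exact hSnd.2
  have hb1pos : 0 < b1 := by
    rw [hb1]; exact ENNReal.toReal_pos hS1ne (measure_ne_top _ _)
  have hb0pos : 0 < b0 := by
    rw [hb0]; exact ENNReal.toReal_pos hS0ne (measure_ne_top _ _)
  have hp1pos : 0 < p1 := ENNReal.toReal_pos (hYS true).ne' (measure_ne_top _ _)
  have hp0pos : 0 < p0 := ENNReal.toReal_pos (hYS false).ne' (measure_ne_top _ _)
  haveI i1 : IsProbabilityMeasure (P[|{ω | S ω = true}]) :=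
    cond_isProbabilityMeasure hS1ne
  haveI i0 : IsProbabilityMeasure (P[|{ω | S ω = false}]) :=
    cond_isProbabilityMeasure hS0ne
  -- p_s = b_s * m_s
  have hηabs : ∀ x s, |η x s| ≤ 1 := fun x s =>
    abs_le.2 ⟨by linarith [(hη01 x s).1], (hη01 x s).2⟩
  have hpb1 : p1 = b1 * m1 := by
    have hφm : Measurable (fun z : (Fin d → ℝ) × Bool => if z.2 = true then (1:ℝ) else 0) :=
      Measurable.ite (measurable_snd (measurableSet_singleton true))
        measurable_const measurable_const
    have hr := hreg _ hφm ⟨1, by intro z; split <;> norm_num⟩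
    simp only at hr
    have hl : ∫ ω, (if Y ω then (1:ℝ) else 0) * (if S ω = true then (1:ℝ) else 0) ∂P
        = p1 := by
      rw [hp1def, meas_toReal P hB1]
      congr 1; funext ω
      by_cases hy : Y ω = true <;> by_cases hs : S ω = true <;>
        simp [Set.indicator_apply, hy, hs]
    have hrr : ∫ ω, η (X ω) (S ω) * (if S ω = true then (1:ℝ) else 0) ∂P = b1 * m1 := by
      rw [split_S P S hS hS1ne hS0ne _ (fun ω => η (X ω) true) (fun _ => (0:ℝ)) ?_ ?_ ?_]
      · rw [← hb1, ← hm1]; simp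
      · refine intbl _ ?_ (C := 1) ?_
        · exact hηXS.mul (hφm.comp hXS)
        · intro ω; rw [abs_mul]
          have h1 := hηabs (X ω) (S ω)
          have h2 : |(if S ω = true then (1:ℝ) else 0)| ≤ 1 := by split <;> norm_num
          nlinarith [abs_nonneg (η (X ω) (S ω)), abs_nonneg (if S ω = true then (1:ℝ) else 0)]
      · intro ω hω; simp [hω]
      · intro ω hω; simp [hω]
    rw [← hl, hr, hrr]
  have hpb0 : p0 = b0 * m0 := by
    have hφm : Measurable (fun z : (Fin d → ℝ) × Bool => if z.2 = false then (1:ℝ) else 0) :=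
      Measurable.ite (measurable_snd (measurableSet_singleton false))
        measurable_const measurable_const
    have hr := hreg _ hφm ⟨1, by intro z; split <;> norm_num⟩
    simp only at hr
    have hl : ∫ ω, (if Y ω then (1:ℝ) else 0) * (if S ω = false then (1:ℝ) else 0) ∂P
        = p0 := by
      rw [hp0def, meas_toReal P hB0]
      congr 1; funext ω
      by_cases hy : Y ω = true <;> by_cases hs : S ω = false <;>
        simp [Set.indicator_apply, hy, hs]
    have hrr : ∫ ω, η (X ω) (S ω) * (if S ω = false then (1:ℝ) else 0) ∂P = b0 * m0 := by
      rw [split_S P S hS hS1ne hS0ne _ (fun _ => (0:ℝ)) (fun ω => η (X ω) false) ?_ ?_ ?_]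
      · rw [← hb0, ← hm0]; simp
      · refine intbl _ ?_ (C := 1) ?_
        · exact hηXS.mul (hφm.comp hXS)
        · intro ω; rw [abs_mul]
          have h1 := hηabs (X ω) (S ω)
          have h2 : |(if S ω = false then (1:ℝ) else 0)| ≤ 1 := by split <;> norm_num
          nlinarith [abs_nonneg (η (X ω) (S ω)), abs_nonneg (if S ω = false then (1:ℝ) else 0)]
      · intro ω hω; simp [hω]
      · intro ω hω; simp [hω]
    rw [← hl, hr, hrr]
  have hm1pos : 0 < m1 := by
    nlinarith
  have hm0pos : 0 < m0 := by
    nlinarith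
  -- the key formula
  have key : ∀ g : (Fin d → ℝ) → Bool → Bool,
      Measurable (fun p : (Fin d → ℝ) × Bool => g p.1 p.2) →
      L g = (P {ω | Y ω = true}).toReal
        - ∫ ω, (if g (X ω) true then H1 (X ω) else 0) ∂(P[|{ω | S ω = true}])
        - ∫ ω, (if g (X ω) false then H0 (X ω) else 0) ∂(P[|{ω | S ω = false}]) := by
    intro g hg
    have hgX : Measurable (fun ω => g (X ω) (S ω)) := hg.comp hXS
    have hGset : MeasurableSet {ω | g (X ω) (S ω) = true} :=
      hgX (measurableSet_singleton true)
    have hφgm : Measurable (fun z : (Fin d → ℝ) × Bool => if g z.1 z.2 then (1:ℝ) else 0) :=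
      Measurable.ite (hg (measurableSet_singleton true)) measurable_const measurable_const
    have hφ1m : Measurable (fun z : (Fin d → ℝ) × Bool =>
        if z.2 = true ∧ g z.1 z.2 = true then (1:ℝ) else 0) := by
      refine Measurable.ite ?_ measurable_const measurable_const
      exact (measurable_snd (measurableSet_singleton true)).inter
        (hg (measurableSet_singleton true))
    have hφ0m : Measurable (fun z : (Fin d → ℝ) × Bool =>
        if z.2 = false ∧ g z.1 z.2 = true then (1:ℝ) else 0) := by
      refine Measurable.ite ?_ measurable_const measurable_const
      exact (measurable_snd (measurableSet_singleton false)).inter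
        (hg (measurableSet_singleton true))
    -- integrable pieces
    have iG : Integrable (fun ω => if g (X ω) (S ω) then (1:ℝ) else 0) P := by
      refine intbl _ ?_ (C := 1) ?_
      · exact Measurable.ite hGset measurable_const measurable_const
      · intro ω; split <;> norm_num
    have iY : Integrable (fun ω => if Y ω then (1:ℝ) else 0) P := by
      refine intbl _ ?_ (C := 1) ?_
      · exact Measurable.ite (hY (measurableSet_singleton true)) measurable_const
          measurable_const
      · intro ω; split <;> norm_num
    have iYG : Integrable (fun ω => (if Y ω then (1:ℝ) else 0)
        * (if g (X ω) (S ω) then (1:ℝ) else 0)) P := by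
      refine intbl _ ?_ (C := 1) ?_
      · exact (Measurable.ite (hY (measurableSet_singleton true)) measurable_const
          measurable_const).mul (Measurable.ite hGset measurable_const measurable_const)
      · intro ω; rw [abs_mul]; split <;> split <;> norm_num
    have iEG : Integrable (fun ω => η (X ω) (S ω)
        * (if g (X ω) (S ω) then (1:ℝ) else 0)) P := by
      refine intbl _ ?_ (C := 1) ?_
      · exact hηXS.mul (Measurable.ite hGset measurable_const measurable_const)
      · intro ω; rw [abs_mul]
        have h1 := hηabs (X ω) (S ω)
        split
        · simpa using h1
        · simp
    have iEG1 : Integrable (fun ω => η (X ω) (S ω)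
        * (if S ω = true ∧ g (X ω) (S ω) = true then (1:ℝ) else 0)) P := by
      refine intbl _ ?_ (C := 1) ?_
      · exact hηXS.mul (Measurable.ite (hA1.inter hGset) measurable_const measurable_const)
      · intro ω; rw [abs_mul]
        have h1 := hηabs (X ω) (S ω)
        split
        · simpa using h1
        · simp
    have iEG0 : Integrable (fun ω => η (X ω) (S ω)
        * (if S ω = false ∧ g (X ω) (S ω) = true then (1:ℝ) else 0)) P := by
      refine intbl _ ?_ (C := 1) ?_
      · exact hηXS.mul (Measurable.ite (hA0.inter hGset) measurable_const measurable_const)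
      · intro ω; rw [abs_mul]
        have h1 := hηabs (X ω) (S ω)
        split
        · simpa using h1
        · simp
    -- P(Y = 1) as an integral
    have hYset : MeasurableSet {ω | Y ω = true} := hY (measurableSet_singleton true)
    have hPY : (P {ω | Y ω = true}).toReal = ∫ ω, (if Y ω then (1:ℝ) else 0) ∂P := by
      rw [meas_toReal P hYset]
      congr 1; funext ω
      by_cases hy : Y ω = true <;> simp [Set.indicator_apply, hy]
    -- regression identities
    have hYGr := hreg _ hφgm ⟨1, by intro z; split <;> norm_num⟩
    simp only at hYGr
    have hY1r := hreg _ hφ1m ⟨1, by intro z; split <;> norm_num⟩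
    simp only at hY1r
    have hY0r := hreg _ hφ0m ⟨1, by intro z; split <;> norm_num⟩
    simp only at hY0r
    -- risk formula
    have hmne : MeasurableSet {ω | g (X ω) (S ω) ≠ Y ω} := by
      have he : {ω | g (X ω) (S ω) ≠ Y ω}
          = ({ω | g (X ω) (S ω) = true} ∩ {ω | Y ω = true}ᶜ)
            ∪ ({ω | g (X ω) (S ω) = true}ᶜ ∩ {ω | Y ω = true}) := by
        ext ω; cases hgg : g (X ω) (S ω) <;> cases hyy : Y ω <;> simp [hgg, hyy]
      rw [he]
      exact (hGset.inter (hY (measurableSet_singleton true)).compl).union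
        (hGset.compl.inter (hY (measurableSet_singleton true)))
    have hrisk : (P {ω | g (X ω) (S ω) ≠ Y ω}).toReal
        = (∫ ω, (if g (X ω) (S ω) then (1:ℝ) else 0) ∂P)
          + (P {ω | Y ω = true}).toReal
          - 2 * ∫ ω, η (X ω) (S ω) * (if g (X ω) (S ω) then (1:ℝ) else 0) ∂P := by
      have e0 : (P {ω | g (X ω) (S ω) ≠ Y ω}).toReal
          = ∫ ω, ((if g (X ω) (S ω) then (1:ℝ) else 0) + (if Y ω then (1:ℝ) else 0)
              - 2 * ((if Y ω then (1:ℝ) else 0)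
                * (if g (X ω) (S ω) then (1:ℝ) else 0))) ∂P := by
        rw [meas_toReal P hmne]
        congr 1; funext ω
        cases hgg : g (X ω) (S ω) <;> cases hyy : Y ω <;>
          simp [Set.indicator_apply, hgg, hyy] <;> norm_num
      have iGaY : Integrable (fun ω => (if g (X ω) (S ω) then (1:ℝ) else 0)
          + (if Y ω then (1:ℝ) else 0)) P := iG.add iY
      have i2YG : Integrable (fun ω => 2 * ((if Y ω then (1:ℝ) else 0)
          * (if g (X ω) (S ω) then (1:ℝ) else 0))) P := iYG.const_mul 2
      have h2 := integral_sub iGaY i2YG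
      have h3 := integral_add iG iY
      rw [e0, h2, h3, integral_const_mul, hYGr, ← hPY]
    -- conditional probability terms
    have hcond1 : (P[|{ω | Y ω = true ∧ S ω = true}] {ω | g (X ω) (S ω) = true}).toReal
        = p1⁻¹ * ∫ ω, η (X ω) (S ω)
            * (if S ω = true ∧ g (X ω) (S ω) = true then (1:ℝ) else 0) ∂P := by
      rw [cond_apply hB1 P, ENNReal.toReal_mul, ENNReal.toReal_inv]
      congr 1
      rw [← hY1r, meas_toReal P (hB1.inter hGset)]
      congr 1; funext ω
      by_cases hy : Y ω = true <;> by_cases hs : S ω = true <;>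
        by_cases hgg : g (X ω) (S ω) = true <;>
        simp [Set.indicator_apply, Set.mem_inter_iff, hy, hs, hgg]
    have hcond0 : (P[|{ω | Y ω = true ∧ S ω = false}] {ω | g (X ω) (S ω) = true}).toReal
        = p0⁻¹ * ∫ ω, η (X ω) (S ω)
            * (if S ω = false ∧ g (X ω) (S ω) = true then (1:ℝ) else 0) ∂P := by
      rw [cond_apply hB0 P, ENNReal.toReal_mul, ENNReal.toReal_inv]
      congr 1
      rw [← hY0r, meas_toReal P (hB0.inter hGset)]
      congr 1; funext ω
      by_cases hy : Y ω = true <;> by_cases hs : S ω = false <;>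
        by_cases hgg : g (X ω) (S ω) = true <;>
        simp [Set.indicator_apply, Set.mem_inter_iff, hy, hs, hgg]
    -- combine the integrals over P into one
    have hlin : ∫ ω, ((if g (X ω) (S ω) then (1:ℝ) else 0)
          - 2 * (η (X ω) (S ω) * (if g (X ω) (S ω) then (1:ℝ) else 0))
          + lam * p1⁻¹ * (η (X ω) (S ω)
              * (if S ω = true ∧ g (X ω) (S ω) = true then (1:ℝ) else 0))
          - lam * p0⁻¹ * (η (X ω) (S ω)
              * (if S ω = false ∧ g (X ω) (S ω) = true then (1:ℝ) else 0))) ∂P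
        = (∫ ω, (if g (X ω) (S ω) then (1:ℝ) else 0) ∂P)
          - 2 * ∫ ω, η (X ω) (S ω) * (if g (X ω) (S ω) then (1:ℝ) else 0) ∂P
          + lam * p1⁻¹ * ∫ ω, η (X ω) (S ω)
              * (if S ω = true ∧ g (X ω) (S ω) = true then (1:ℝ) else 0) ∂P
          - lam * p0⁻¹ * ∫ ω, η (X ω) (S ω)
              * (if S ω = false ∧ g (X ω) (S ω) = true then (1:ℝ) else 0) ∂P := by
      have i2EG : Integrable (fun ω => 2 * (η (X ω) (S ω)
          * (if g (X ω) (S ω) then (1:ℝ) else 0))) P := iEG.const_mul 2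
      have iA : Integrable (fun ω => (if g (X ω) (S ω) then (1:ℝ) else 0)
          - 2 * (η (X ω) (S ω) * (if g (X ω) (S ω) then (1:ℝ) else 0))) P := iG.sub i2EG
      have iE1c : Integrable (fun ω => lam * p1⁻¹ * (η (X ω) (S ω)
          * (if S ω = true ∧ g (X ω) (S ω) = true then (1:ℝ) else 0))) P :=
        iEG1.const_mul (lam * p1⁻¹)
      have iE0c : Integrable (fun ω => lam * p0⁻¹ * (η (X ω) (S ω)
          * (if S ω = false ∧ g (X ω) (S ω) = true then (1:ℝ) else 0))) P :=
        iEG0.const_mul (lam * p0⁻¹)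
      have iB : Integrable (fun ω => ((if g (X ω) (S ω) then (1:ℝ) else 0)
          - 2 * (η (X ω) (S ω) * (if g (X ω) (S ω) then (1:ℝ) else 0)))
          + lam * p1⁻¹ * (η (X ω) (S ω)
            * (if S ω = true ∧ g (X ω) (S ω) = true then (1:ℝ) else 0))) P := iA.add iE1c
      have h2 := integral_sub iB iE0c
      have h3 := integral_add iA iE1c
      have h4 := integral_sub iG i2EG
      rw [h2, h3, h4, integral_const_mul, integral_const_mul, integral_const_mul]
    -- split the combined integral along S
    have hsplit : ∫ ω, ((if g (X ω) (S ω) then (1:ℝ) else 0)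
          - 2 * (η (X ω) (S ω) * (if g (X ω) (S ω) then (1:ℝ) else 0))
          + lam * p1⁻¹ * (η (X ω) (S ω)
              * (if S ω = true ∧ g (X ω) (S ω) = true then (1:ℝ) else 0))
          - lam * p0⁻¹ * (η (X ω) (S ω)
              * (if S ω = false ∧ g (X ω) (S ω) = true then (1:ℝ) else 0))) ∂P
        = b1 * ∫ ω, (if g (X ω) true then
              (1 - 2 * η (X ω) true + lam * p1⁻¹ * η (X ω) true) else 0)
            ∂(P[|{ω | S ω = true}])
          + b0 * ∫ ω, (if g (X ω) false then
              (1 - 2 * η (X ω) false - lam * p0⁻¹ * η (X ω) false) else 0)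
            ∂(P[|{ω | S ω = false}]) := by
      rw [hb1, hb0]
      refine split_S P S hS hS1ne hS0ne _ _ _ ?_ ?_ ?_
      · exact ((iG.sub (iEG.const_mul 2)).add (iEG1.const_mul (lam * p1⁻¹))).sub
          (iEG0.const_mul (lam * p0⁻¹))
      · intro ω hω
        simp only [hω]
        by_cases hgg : g (X ω) true = true <;> simp [hgg] <;> try ring
      · intro ω hω
        simp only [hω]
        by_cases hgg : g (X ω) false = true <;> simp [hgg] <;> try ring
    -- rewrite each conditional integral using H1, H0
    have ht1 : b1 * ∫ ω, (if g (X ω) true then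
            (1 - 2 * η (X ω) true + lam * p1⁻¹ * η (X ω) true) else 0)
          ∂(P[|{ω | S ω = true}])
        = - ∫ ω, (if g (X ω) true then H1 (X ω) else 0) ∂(P[|{ω | S ω = true}]) := by
      rw [← integral_const_mul, ← integral_neg]
      refine integral_congr_ae (Filter.Eventually.of_forall fun ω => ?_)
      by_cases hgg : g (X ω) true = true <;>
        simp only [hgg, if_true, if_false, hH1def, hc1def]
      · ring
      · simp
    have ht0 : b0 * ∫ ω, (if g (X ω) false then
            (1 - 2 * η (X ω) false - lam * p0⁻¹ * η (X ω) false) else 0)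
          ∂(P[|{ω | S ω = false}])
        = - ∫ ω, (if g (X ω) false then H0 (X ω) else 0) ∂(P[|{ω | S ω = false}]) := by
      rw [← integral_const_mul, ← integral_neg]
      refine integral_congr_ae (Filter.Eventually.of_forall fun ω => ?_)
      by_cases hgg : g (X ω) false = true <;>
        simp only [hgg, if_true, if_false, hH0def, hc0def]
      · ring
      · simp
    rw [hL g, hrisk, hcond1, hcond0]
    linear_combination -hlin + hsplit + ht1 + ht0
  -- measurability of glam
  have hglam_m : Measurable (fun p : (Fin d → ℝ) × Bool => glam p.1 p.2) := by
    have hset : MeasurableSet {p : (Fin d → ℝ) × Bool | glam p.1 p.2 = true} := by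
      have heq : {p : (Fin d → ℝ) × Bool | glam p.1 p.2 = true}
          = ({p : (Fin d → ℝ) × Bool | p.2 = true} ∩ {p | 1 ≤ η p.1 true * c1})
            ∪ ({p : (Fin d → ℝ) × Bool | p.2 = false} ∩ {p | 1 ≤ η p.1 false * c0}) := by
        ext ⟨x, s⟩
        cases s
        · simp only [Set.mem_setOf_eq, Set.mem_union, Set.mem_inter_iff, hglam0 x]
          simp
        · simp only [Set.mem_setOf_eq, Set.mem_union, Set.mem_inter_iff, hglam1 x]
          simp
      rw [heq]
      refine MeasurableSet.union (MeasurableSet.inter ?_ ?_) (MeasurableSet.inter ?_ ?_)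
      · exact measurable_snd (measurableSet_singleton true)
      · exact measurableSet_le measurable_const
          ((hηm.comp (measurable_fst.prodMk measurable_const)).mul_const c1)
      · exact measurable_snd (measurableSet_singleton false)
      · exact measurableSet_le measurable_const
          ((hηm.comp (measurable_fst.prodMk measurable_const)).mul_const c0)
    apply measurable_to_countable'
    intro b
    cases b with
    | false =>
      have : (fun p : (Fin d → ℝ) × Bool => glam p.1 p.2) ⁻¹' {false}
          = {p : (Fin d → ℝ) × Bool | glam p.1 p.2 = true}ᶜ := by ext p; simp
      rw [this]; exact hset.compl
    | true =>
      have : (fun p : (Fin d → ℝ) × Bool => glam p.1 p.2) ⁻¹' {true}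
          = {p : (Fin d → ℝ) × Bool | glam p.1 p.2 = true} := by ext p; simp
      rw [this]; exact hset
  -- glam's indicator is the positive part
  have hpt1 : ∀ x, (if glam x true then H1 x else 0) = max (H1 x) 0 := by
    intro x
    have hH : H1 x = b1 * (η x true * c1 - 1) := rfl
    cases hgx : glam x true with
    | true =>
      have hge : 1 ≤ η x true * c1 := (hglam1 x).1 hgx
      have h0 : 0 ≤ H1 x := by rw [hH]; nlinarith
      rw [if_pos rfl, max_eq_left h0]
    | false =>
      have hlt : η x true * c1 < 1 := by
        by_contra h
        push_neg at h
        exact absurd ((hglam1 x).2 h) (by simp [hgx])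
      have h0 : H1 x ≤ 0 := by rw [hH]; nlinarith
      rw [if_neg (by simp), max_eq_right h0]
  have hpt0 : ∀ x, (if glam x false then H0 x else 0) = max (H0 x) 0 := by
    intro x
    have hH : H0 x = b0 * (η x false * c0 - 1) := rfl
    cases hgx : glam x false with
    | true =>
      have hge : 1 ≤ η x false * c0 := (hglam0 x).1 hgx
      have h0 : 0 ≤ H0 x := by rw [hH]; nlinarith
      rw [if_pos rfl, max_eq_left h0]
    | false =>
      have hlt : η x false * c0 < 1 := by
        by_contra h
        push_neg at h
        exact absurd ((hglam0 x).2 h) (by simp [hgx])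
      have h0 : H0 x ≤ 0 := by rw [hH]; nlinarith
      rw [if_neg (by simp), max_eq_right h0]
  -- value of L glam
  have hLglam : L glam = (P {ω | Y ω = true}).toReal
      - ∫ ω, max (H1 (X ω)) 0 ∂(P[|{ω | S ω = true}])
      - ∫ ω, max (H0 (X ω)) 0 ∂(P[|{ω | S ω = false}]) := by
    rw [key glam hglam_m]
    congr 1
    · congr 1
      exact integral_congr_ae (Filter.Eventually.of_forall fun ω => hpt1 (X ω))
    · exact integral_congr_ae (Filter.Eventually.of_forall fun ω => hpt0 (X ω))
  constructor
  · -- minimality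
    intro g hg
    rw [key g hg, hLglam]
    have hH1Xm : Measurable (fun ω => H1 (X ω)) := by
      simp only [hH1def]
      exact ((hη1X.mul_const c1).sub measurable_const).const_mul b1
    have hH0Xm : Measurable (fun ω => H0 (X ω)) := by
      simp only [hH0def]
      exact ((hη0X.mul_const c0).sub measurable_const).const_mul b0
    have hC1 : ∀ x, |H1 x| ≤ |b1| * (|c1| + 1) := fun x => by
      simp only [hH1def]
      exact bnd_aux (hη01 x true).1 (hη01 x true).2
    have hC0 : ∀ x, |H0 x| ≤ |b0| * (|c0| + 1) := fun x => by
      simp only [hH0def]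
      exact bnd_aux (hη01 x false).1 (hη01 x false).2
    have hint1 : ∫ ω, (if g (X ω) true then H1 (X ω) else 0) ∂(P[|{ω | S ω = true}])
        ≤ ∫ ω, max (H1 (X ω)) 0 ∂(P[|{ω | S ω = true}]) := by
      refine integral_mono ?_ ?_ ?_
      · refine intbl _ ?_ (C := |b1| * (|c1| + 1)) ?_
        · exact Measurable.ite ((hg.comp (hX.prodMk measurable_const))
            (measurableSet_singleton true)) hH1Xm measurable_const
        · intro ω; split
          · exact hC1 _
          · simp; positivity
      · refine intbl _ ?_ (C := |b1| * (|c1| + 1)) ?_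
        · exact hH1Xm.max measurable_const
        · intro ω
          rw [abs_of_nonneg (le_max_right _ _)]
          exact max_le (le_trans (le_abs_self _) (hC1 _)) (by positivity)
      · intro ω; dsimp only; split
        · exact le_max_left _ _
        · exact le_max_right _ _
    have hint0 : ∫ ω, (if g (X ω) false then H0 (X ω) else 0) ∂(P[|{ω | S ω = false}])
        ≤ ∫ ω, max (H0 (X ω)) 0 ∂(P[|{ω | S ω = false}]) := by
      refine integral_mono ?_ ?_ ?_
      · refine intbl _ ?_ (C := |b0| * (|c0| + 1)) ?_
        · exact Measurable.ite ((hg.comp (hX.prodMk measurable_const))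
            (measurableSet_singleton true)) hH0Xm measurable_const
        · intro ω; split
          · exact hC0 _
          · simp; positivity
      · refine intbl _ ?_ (C := |b0| * (|c0| + 1)) ?_
        · exact hH0Xm.max measurable_const
        · intro ω
          rw [abs_of_nonneg (le_max_right _ _)]
          exact max_le (le_trans (le_abs_self _) (hC0 _)) (by positivity)
      · intro ω; dsimp only; split
        · exact le_max_left _ _
        · exact le_max_right _ _
    linarith
  · -- value
    have hb1ne := hb1pos.ne'
    have hm1ne := hm1pos.ne'
    have hb0ne := hb0pos.ne'
    have hm0ne := hm0pos.ne'
    have harith1 : ∀ e : ℝ, b1 * (e * c1 - 1) = b1 * (2 * e - 1) - lam * e / m1 := by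
      intro e
      rw [hc1def, hpb1]
      field_simp
      ring
    have harith0 : ∀ e : ℝ, b0 * (e * c0 - 1) = b0 * (2 * e - 1) + lam * e / m0 := by
      intro e
      rw [hc0def, hpb0]
      field_simp
      ring
    rw [hLglam]
    congr 1
    · congr 1
      apply integral_congr_ae (Filter.Eventually.of_forall fun ω => ?_)
      congr 1
      exact harith1 (η (X ω) true)
    · apply integral_congr_ae (Filter.Eventually.of_forall fun ω => ?_)
      congr 1
      exact harith0 (η (X ω) false)
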